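/- If x ∈ Q satisfies ⟨x,β_i⟩ = ⟨α₀,β_i⟩ for i = 0,1,2,3, ⟨x,γ₀⟩ = ⟨α₀,γ₀⟩, and ⟨x,x⟩ = −2, then there exists an integer z such that x = α₀ + zK' or x = α₀ + α₂ + α₃ + zK'. -/
import Mathlib


open scoped BigOperators

/-- The Picard lattice of the blown-up surface: free ℤ-module with basis
`H₀,H₁,E₁,…,E₈`, realized as coordinates `0,1,2,…,9` of `Fin 10 → ℤ`. -/
abbrev L : Type := Fin 10 → ℤ

def H0 : L := Pi.single 0 1
def H1 : L := Pi.single 1 1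
def E1 : L := Pi.single 2 1
def E2 : L := Pi.single 3 1
def E3 : L := Pi.single 4 1
def E4 : L := Pi.single 5 1
def E5 : L := Pi.single 6 1
def E6 : L := Pi.single 7 1
def E7 : L := Pi.single 8 1
def E8 : L := Pi.single 9 1

/-- The intersection form: `⟨H₀,H₁⟩ = 1`, `⟨H_i,H_i⟩ = 0`, `⟨E_k,E_l⟩ = -δ_{kl}`,
`⟨H_i,E_k⟩ = 0`. -/
def ip (x y : L) : ℤ :=
  x 0 * y 1 + x 1 * y 0 - x 2 * y 2 - x 3 * y 3 - x 4 * y 4 - x 5 * y 5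
    - x 6 * y 6 - x 7 * y 7 - x 8 * y 8 - x 9 * y 9

lemma ip_add_left (x y v : L) : ip (x + y) v = ip x v + ip y v := by
  simp only [ip, Pi.add_apply]; ring

lemma ip_smul_left (c : ℤ) (x v : L) : ip (c • x) v = c * ip x v := by
  simp only [ip, Pi.smul_apply, smul_eq_mul]; ring

/-- The reflection `x ↦ x + ⟨x,v⟩ v` associated to a vector `v` with `⟨v,v⟩ = -2`. -/
def reflV (v : L) : L →ₗ[ℤ] L where
  toFun x := x + ip x v • v
  map_add' x y := by
    show x + y + ip (x + y) v • v = (x + ip x v • v) + (y + ip y v • v)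
    rw [ip_add_left, add_smul]; abel
  map_smul' c x := by
    show c • x + ip (c • x) v • v = c • (x + ip x v • v)
    rw [ip_smul_left, mul_smul, smul_add]

-- simple roots
def al0 : L := E5 - E6
def al1 : L := E1 - E2
def al2 : L := H1 - E1 - E5
def al3 : L := H0 - E3 - E7
def al4 : L := E3 - E4
def al5 : L := E7 - E8

/-- The root lattice `Q = ℤα₀ + ⋯ + ℤα₅`. -/
def Q : Submodule ℤ L := Submodule.span ℤ {al0, al1, al2, al3, al4, al5}

-- the simple reflections w_i
def w0 : L →ₗ[ℤ] L := reflV al0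
def w1 : L →ₗ[ℤ] L := reflV al1
def w2 : L →ₗ[ℤ] L := reflV al2
def w3 : L →ₗ[ℤ] L := reflV al3
def w4 : L →ₗ[ℤ] L := reflV al4
def w5 : L →ₗ[ℤ] L := reflV al5

/-- `σ₁₀`: exchanges `E₁↔E₅`, `E₂↔E₆`. -/
def sig10 : L →ₗ[ℤ] L := LinearMap.funLeft ℤ ℤ ![0, 1, 6, 7, 4, 5, 2, 3, 8, 9]

/-- `σ₅₄₃₂₁₀`: exchanges `H₀↔H₁`, `E₁↔E₃`, `E₂↔E₄`, `E₅↔E₇`, `E₆↔E₈`. -/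
def sig543210 : L →ₗ[ℤ] L := LinearMap.funLeft ℤ ℤ ![1, 0, 4, 5, 2, 3, 8, 9, 6, 7]

/-- `σ₅₄ = σ₅₄₃₂₁₀ ∘ σ₁₀ ∘ σ₅₄₃₂₁₀`: exchanges `E₃↔E₇`, `E₄↔E₈`. -/
def sig54 : L →ₗ[ℤ] L := sig543210 ∘ₗ sig10 ∘ₗ sig543210

-- components of the anticanonical divisor
def D0 : L := H0 - E1 - E2
def D1 : L := H1 - E3 - E4
def D2 : L := H0 - E5 - E6
def D3 : L := H1 - E7 - E8

/-- The anticanonical class `δ = -K_X = 2H₀+2H₁-E₁-⋯-E₈`. -/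
def delta : L := 2 • H0 + 2 • H1 - E1 - E2 - E3 - E4 - E5 - E6 - E7 - E8

/-- `K' = α₀+α₁+2α₂+2α₃+α₄+α₅`, the canonical central element. -/
def Kp : L := al0 + al1 + 2 • al2 + 2 • al3 + al4 + al5

-- β and γ roots
def b0 : L := al3 + al5
def b1 : L := al1 + al2
def b2 : L := al3 + al4
def b3 : L := al0 + al2
def g0 : L := al0 + al1 + al2 + al3
def g1 : L := al2 + al3 + al4 + al5

lemma ip_add_right' (v x y : L) : ip v (x + y) = ip v x + ip v y := by
  simp only [ip, Pi.add_apply]; ring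

lemma ip_smul_right' (c : ℤ) (v x : L) : ip v (c • x) = c * ip v x := by
  simp only [ip, Pi.smul_apply, smul_eq_mul]; ring

lemma cc00 : ip al0 al0 = -2 := by decide

lemma cc01 : ip al0 al1 = 0 := by decide

lemma cc02 : ip al0 al2 = 1 := by decide

lemma cc03 : ip al0 al3 = 0 := by decide

lemma cc04 : ip al0 al4 = 0 := by decide

lemma cc05 : ip al0 al5 = 0 := by decide

lemma cc10 : ip al1 al0 = 0 := by decide

lemma cc11 : ip al1 al1 = -2 := by decide

lemma cc12 : ip al1 al2 = 1 := by decide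

lemma cc13 : ip al1 al3 = 0 := by decide

lemma cc14 : ip al1 al4 = 0 := by decide

lemma cc15 : ip al1 al5 = 0 := by decide

lemma cc20 : ip al2 al0 = 1 := by decide

lemma cc21 : ip al2 al1 = 1 := by decide

lemma cc22 : ip al2 al2 = -2 := by decide

lemma cc23 : ip al2 al3 = 1 := by decide

lemma cc24 : ip al2 al4 = 0 := by decide

lemma cc25 : ip al2 al5 = 0 := by decide

lemma cc30 : ip al3 al0 = 0 := by decide

lemma cc31 : ip al3 al1 = 0 := by decide

lemma cc32 : ip al3 al2 = 1 := by decide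

lemma cc33 : ip al3 al3 = -2 := by decide

lemma cc34 : ip al3 al4 = 1 := by decide

lemma cc35 : ip al3 al5 = 1 := by decide

lemma cc40 : ip al4 al0 = 0 := by decide

lemma cc41 : ip al4 al1 = 0 := by decide

lemma cc42 : ip al4 al2 = 0 := by decide

lemma cc43 : ip al4 al3 = 1 := by decide

lemma cc44 : ip al4 al4 = -2 := by decide

lemma cc45 : ip al4 al5 = 0 := by decide

lemma cc50 : ip al5 al0 = 0 := by decide

lemma cc51 : ip al5 al1 = 0 := by decide

lemma cc52 : ip al5 al2 = 0 := by decide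

lemma cc53 : ip al5 al3 = 1 := by decide

lemma cc54 : ip al5 al4 = 0 := by decide

lemma cc55 : ip al5 al5 = -2 := by decide

/-- The sublattice `Q_B ⊆ Q` of elements `∑ aᵢαᵢ` with `a₀+a₁-a₂-a₃+a₄+a₅ = 0`. -/
def QB : Set L :=
  {x | ∃ a₀ a₁ a₂ a₃ a₄ a₅ : ℤ,
    x = a₀ • al0 + a₁ • al1 + a₂ • al2 + a₃ • al3 + a₄ • al4 + a₅ • al5 ∧
    a₀ + a₁ - a₂ - a₃ + a₄ + a₅ = 0}

/-- If `x ∈ Q` has the same intersection numbers with `β₀,…,β₃,γ₀` as `α₀` and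
`⟨x,x⟩ = -2`, then `x = α₀ + zK'` or `x = α₀+α₂+α₃+zK'` for some integer `z`. -/
theorem stmt_14 (x : L) (hx : x ∈ Q)
    (hb0 : ip x b0 = ip al0 b0) (hb1 : ip x b1 = ip al0 b1)
    (hb2 : ip x b2 = ip al0 b2) (hb3 : ip x b3 = ip al0 b3)
    (hg0 : ip x g0 = ip al0 g0) (hxx : ip x x = -2) :
    ∃ z : ℤ, x = al0 + z • Kp ∨ x = al0 + al2 + al3 + z • Kp := by
  rw [Q] at hx
  obtain ⟨a0, y1, hy1, rfl⟩ := Submodule.mem_span_insert.mp hx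
  obtain ⟨a1, y2, hy2, rfl⟩ := Submodule.mem_span_insert.mp hy1
  obtain ⟨a2, y3, hy3, rfl⟩ := Submodule.mem_span_insert.mp hy2
  obtain ⟨a3, y4, hy4, rfl⟩ := Submodule.mem_span_insert.mp hy3
  obtain ⟨a4, y5, hy5, rfl⟩ := Submodule.mem_span_insert.mp hy4
  obtain ⟨a5, rfl⟩ := Submodule.mem_span_singleton.mp hy5
  have EL : ∀ v : L, ip (a0 • al0 + (a1 • al1 + (a2 • al2 + (a3 • al3 + (a4 • al4 + a5 • al5))))) v
      = a0 * ip al0 v + (a1 * ip al1 v + (a2 * ip al2 v + (a3 * ip al3 v +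
        (a4 * ip al4 v + a5 * ip al5 v)))) := by
    intro v
    simp only [ip_add_left, ip_smul_left]
  simp only [b0, b1, b2, b3, g0, EL, ip_add_right', ip_smul_right', cc00, cc01, cc02, cc03, cc04, cc05, cc10, cc11, cc12, cc13, cc14, cc15, cc20, cc21, cc22, cc23, cc24, cc25, cc30, cc31, cc32, cc33, cc34, cc35, cc40, cc41, cc42, cc43, cc44, cc45, cc50, cc51, cc52, cc53, cc54, cc55] at hb0 hb1 hb2 hb3 hg0 hxx
  have h23 : a2 = a3 := by linarith
  have h45 : a4 = a5 := by linarith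
  have h01 : a0 = a1 + 1 := by linarith
  have h14 : a1 = a4 := by linarith
  subst h23 h45 h01 h14
  have hs : (a2 - 2*a1) * (a2 - 2*a1 - 1) = 0 := by nlinarith [hxx]
  refine ⟨a1, ?_⟩
  rcases mul_eq_zero.mp hs with h | h
  · left
    have ha2 : a2 = 2*a1 := by omega
    subst ha2
    simp only [Kp]
    module
  · right
    have ha2 : a2 = 2*a1 + 1 := by omega
    subst ha2
    simp only [Kp]
    module
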